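/- With the notation of the previous statement (finite linearly ordered set S with maximum m, alternating sum γ with values in an abelian group V), the image of γ on the subsets of S of even cardinality has the same (finite) cardinality as the image of γ on the subsets of odd cardinality. -/

import Mathlib

def altSum {S V : Type*} [LinearOrder S] [AddCommGroup V] (w : S → V) (Q : Finset S) : V :=
  ((Q.sort (· ≤ ·)).mapIdx fun i x => ((-1 : ℤ) ^ i) • w x).sum

lemma sort_insert_max {S : Type*} [LinearOrder S] {m : S} {Q : Finset S}
    (hm : ∀ s ∈ Q, s ≤ m) (hmQ : m ∉ Q) :
    (insert m Q).sort (· ≤ ·) = Q.sort (· ≤ ·) ++ [m] := by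
  refine (fun h1 h2 h3 => List.Perm.eq_of_pairwise' h2 h3 h1) ?_ (Finset.pairwise_sort _ _) ?_
  · exact ((Finset.sort_perm_toList _ _).trans ((Finset.toList_insert hmQ).trans
      ((Finset.sort_perm_toList _ _).symm.cons m))).trans
      (List.perm_append_singleton m _).symm
  · rw [List.pairwise_append]
    refine ⟨Finset.pairwise_sort _ _, List.pairwise_singleton _ _, ?_⟩
    intro a ha b hb
    rw [List.mem_singleton] at hb
    subst hb
    exact hm a (by simpa using ha)

lemma altSum_insert_max {S V : Type*} [LinearOrder S] [AddCommGroup V] (w : S → V)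
    {m : S} {Q : Finset S} (hm : ∀ s ∈ Q, s ≤ m) (hmQ : m ∉ Q) :
    altSum w (insert m Q) = altSum w Q + ((-1 : ℤ) ^ Q.card) • w m := by
  unfold altSum
  rw [sort_insert_max hm hmQ, List.mapIdx_append_one, List.sum_append,
    List.sum_singleton, Finset.length_sort]

theorem ncard_image_altSum_even_eq_odd {S V : Type*} [Fintype S] [LinearOrder S]
    [AddCommGroup V] (w : S → V) (m : S) (hm : ∀ s, s ≤ m) :
    (altSum w '' {Q : Finset S | Even Q.card}).ncard =
      (altSum w '' {Q : Finset S | Odd Q.card}).ncard := by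
  have key : altSum w '' {Q : Finset S | Odd Q.card} =
      (fun v => v + w m) '' (altSum w '' {Q : Finset S | Even Q.card}) := by
    ext v
    simp only [Set.mem_image, Set.mem_setOf_eq, exists_exists_and_eq_and]
    constructor
    · rintro ⟨Q, hQ, rfl⟩
      by_cases hmQ : m ∈ Q
      · have hpos : 0 < Q.card := Finset.card_pos.mpr ⟨m, hmQ⟩
        have hcard : (Q.erase m).card = Q.card - 1 := Finset.card_erase_of_mem hmQ
        have hev : Even (Q.erase m).card := by
          rw [Nat.even_iff]; rw [Nat.odd_iff] at hQ; omega
        refine ⟨Q.erase m, hev, ?_⟩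
        have h1 : altSum w (insert m (Q.erase m)) =
            altSum w (Q.erase m) + ((-1 : ℤ) ^ (Q.erase m).card) • w m :=
          altSum_insert_max w (fun s _ => hm s) (Finset.notMem_erase m Q)
        rw [Finset.insert_erase hmQ, hev.neg_one_pow, one_smul] at h1
        rw [h1]
      · refine ⟨insert m Q, ?_, ?_⟩
        · rw [Finset.card_insert_of_notMem hmQ, Nat.even_iff]
          rw [Nat.odd_iff] at hQ; omega
        · rw [altSum_insert_max w (fun s _ => hm s) hmQ, hQ.neg_one_pow, neg_smul, one_smul]
          abel
    · rintro ⟨Q, hQ, rfl⟩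
      by_cases hmQ : m ∈ Q
      · have hpos : 0 < Q.card := Finset.card_pos.mpr ⟨m, hmQ⟩
        have hcard : (Q.erase m).card = Q.card - 1 := Finset.card_erase_of_mem hmQ
        have hodd : Odd (Q.erase m).card := by
          rw [Nat.odd_iff]; rw [Nat.even_iff] at hQ; omega
        have h1 : altSum w (insert m (Q.erase m)) =
            altSum w (Q.erase m) + ((-1 : ℤ) ^ (Q.erase m).card) • w m :=
          altSum_insert_max w (fun s _ => hm s) (Finset.notMem_erase m Q)
        rw [Finset.insert_erase hmQ, hodd.neg_one_pow, neg_smul, one_smul] at h1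
        exact ⟨Q.erase m, hodd, by rw [h1]; abel⟩
      · refine ⟨insert m Q, ?_, ?_⟩
        · rw [Finset.card_insert_of_notMem hmQ, Nat.odd_iff]
          rw [Nat.even_iff] at hQ; omega
        · rw [altSum_insert_max w (fun s _ => hm s) hmQ, hQ.neg_one_pow, one_smul]
  rw [key, Set.ncard_image_of_injective _ (add_left_injective (w m))]
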